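/- Let κ > 1 be an integer, let A=(a_{ij}) be an m×n integer matrix with columns a_1,…,a_n ∈ ℤ^m, let w_1,…,w_n ∈ ℂ, and let X = {x=(ξ_1,…,ξ_n) ∈ (ℤ/κℤ)^n : ∑_{j=1}^n a_{ij}ξ_j ≡ 0 (mod κ) for i=1,…,m}. Define q(z_1,…,z_m) = ∏_{j=1}^n (1 + w_j z^{a_j} + w_j z^{2a_j} + ⋯ + w_j z^{(κ−1)a_j}) on 𝕋^m, and let μ be the product over i=1,…,m of the uniform probability measures on the κ-th roots of unity in the i-th circle factor. Then ∫_{𝕋^m} q dμ = w(X). -/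

import Mathlib

open MeasureTheory

noncomputable instance : MeasurableSpace Circle := Subtype.instMeasurableSpace

/-- The uniform probability measure on the `κ`-th roots of unity in the unit circle. -/
noncomputable def rootsOfUnityMeasure (κ : ℕ) : Measure Circle :=
  (κ : ENNReal)⁻¹ • ∑ t ∈ Finset.range κ, Measure.dirac (Circle.exp (2 * Real.pi * t / κ))

instance : MeasurableSingletonClass Circle := Subtype.instMeasurableSingletonClass
instance : BorelSpace Circle := Subtype.borelSpace _

instance (κ : ℕ) : IsFiniteMeasure (rootsOfUnityMeasure κ) := by
  constructor
  simp only [rootsOfUnityMeasure, Measure.smul_apply, Measure.finset_sum_apply, smul_eq_mul,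
    Measure.dirac_apply_of_mem (Set.mem_univ _), Finset.sum_const, Finset.card_range,
    nsmul_eq_mul, mul_one]
  rcases Nat.eq_zero_or_pos κ with h | h
  · simp [h]
  · exact ENNReal.mul_lt_top (ENNReal.inv_lt_top.mpr (by exact_mod_cast h))
      (ENNReal.natCast_lt_top κ)

lemma integral_roum (κ : ℕ) (f : Circle → ℂ) (hf : Continuous f) :
    ∫ z, f z ∂(rootsOfUnityMeasure κ)
      = (κ : ℂ)⁻¹ * ∑ t ∈ Finset.range κ, f (Circle.exp (2 * Real.pi * t / κ)) := by
  rw [rootsOfUnityMeasure, integral_smul_measure, integral_finset_sum_measure]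
  · rw [ENNReal.toReal_inv, ENNReal.toReal_natCast]
    simp only [integral_dirac]
    simp [Complex.real_smul]
  · exact fun i _ => hf.integrable_of_hasCompactSupport ((isClosed_tsupport f).isCompact)

lemma char_sum (κ : ℕ) (hκ : 0 < κ) (e : ℤ) :
    ∫ z : Circle, (z : ℂ) ^ e ∂(rootsOfUnityMeasure κ)
      = if (κ : ℤ) ∣ e then 1 else 0 := by
  have hcont : Continuous (fun z : Circle => (z : ℂ) ^ e) :=
    Continuous.zpow₀ continuous_subtype_val e (fun x => Or.inl (Circle.coe_ne_zero x))
  rw [integral_roum κ _ hcont]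
  have hκC : (κ : ℂ) ≠ 0 := Nat.cast_ne_zero.mpr hκ.ne'
  set u : ℂ := Complex.exp (2 * Real.pi * e / κ * Complex.I) with hu
  have hterm : ∀ t : ℕ, ((Circle.exp (2 * Real.pi * t / κ) : ℂ)) ^ e = u ^ t := by
    intro t
    rw [Circle.coe_exp]
    rw [← Complex.exp_int_mul, ← Complex.exp_nat_mul]
    congr 1
    push_cast
    ring
  simp only [hterm]
  have hupow : u ^ κ = 1 := by
    rw [hu, ← Complex.exp_nat_mul]
    have : (κ : ℂ) * (2 * Real.pi * e / κ * Complex.I) = e * (2 * Real.pi * Complex.I) := by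
      field_simp
    rw [this, Complex.exp_int_mul, Complex.exp_two_pi_mul_I, one_zpow]
  by_cases hdvd : (κ : ℤ) ∣ e
  · obtain ⟨d, rfl⟩ := hdvd
    have hu1 : u = 1 := by
      rw [hu]
      have : (2 * Real.pi * (((κ : ℤ) * d : ℤ) : ℂ) / κ * Complex.I)
          = (d : ℤ) * (2 * Real.pi * Complex.I) := by push_cast; field_simp
      rw [this, Complex.exp_int_mul, Complex.exp_two_pi_mul_I, one_zpow]
    simp [hu1, if_pos, Finset.sum_const, hκC]
  · rw [if_neg hdvd]
    have hu1 : u ≠ 1 := by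
      intro h
      rw [hu, Complex.exp_eq_one_iff] at h
      obtain ⟨nn, hn⟩ := h
      apply hdvd
      refine ⟨nn, ?_⟩
      have h2 : (2 * (Real.pi : ℂ) * Complex.I) ≠ 0 := by
        simp [Real.pi_ne_zero, Complex.I_ne_zero]
      have key : (e : ℂ) * (2 * (Real.pi : ℂ) * Complex.I)
          = ((κ : ℂ) * nn) * (2 * (Real.pi : ℂ) * Complex.I) := by
        field_simp at hn
        linear_combination (2 * (Real.pi : ℂ) * Complex.I) * hn
      have : (e : ℂ) = (κ : ℂ) * nn := mul_right_cancel₀ h2 key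
      exact_mod_cast this
    rw [geom_sum_eq hu1, hupow]
    simp

lemma my_zpow_sum {β : Type*} (x : ℂ) (hx : x ≠ 0) (s : Finset β) (e : β → ℤ) :
    x ^ (∑ b ∈ s, e b) = ∏ b ∈ s, x ^ e b := by
  classical
  induction s using Finset.induction with
  | empty => simp
  | insert _ _ h ih => rw [Finset.sum_insert h, Finset.prod_insert h, zpow_add₀ hx, ih]

lemma range_eq_insert (κ : ℕ) (hκ : 0 < κ) :
    Finset.range κ = insert 0 (Finset.Icc 1 (κ - 1)) := by
  ext t
  simp only [Finset.mem_range, Finset.mem_insert, Finset.mem_Icc]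
  omega

/-- The analogue of Lemma 4.1 used in the proof of Theorem 1.6.  Let `κ > 1`, let `A` be an
`m × n` integer matrix with columns `a_1, …, a_n ∈ ℤ^m`, let
`X = {ξ ∈ (ℤ/κℤ)ⁿ : ∑_j a_{ij} ξ_j ≡ 0 (mod κ)}` (with `ℤ/κℤ` identified with
`{0, …, κ−1}`, here encoded by `Fin κ`), and let
`q(z) = ∏_j (1 + w_j z^{a_j} + w_j z^{2a_j} + ⋯ + w_j z^{(κ−1)a_j})`.  Then the integral of
`q` against the product over the `m` circle factors of the uniform probability measures on
the `κ`-th roots of unity equals `w(X) = ∑_{ξ ∈ X} ∏_{j : ξ_j ≠ 0} w_j`. -/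
theorem stmt9 (κ : ℕ) (hκ : 1 < κ) (m n : ℕ) (a : Fin m → Fin n → ℤ) (w : Fin n → ℂ) :
    (∫ z : Fin m → Circle,
        ∏ j, (1 + ∑ t ∈ Finset.Icc 1 (κ - 1), w j * ∏ i, (z i : ℂ) ^ ((t : ℤ) * a i j))
        ∂(Measure.pi fun _ : Fin m => rootsOfUnityMeasure κ))
      = ∑ ξ ∈ Finset.univ.filter
          (fun ξ : Fin n → Fin κ => ∀ i, (∑ j, a i j * ((ξ j : ℕ) : ℤ)) % (κ : ℤ) = 0),
          ∏ j ∈ Finset.univ.filter (fun j => (ξ j : ℕ) ≠ 0), w j := by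
  classical
  have hκ0 : 0 < κ := by omega
  letI : MeasureSpace Circle := ⟨rootsOfUnityMeasure κ⟩
  haveI : IsFiniteMeasure (volume : Measure Circle) :=
    inferInstanceAs (IsFiniteMeasure (rootsOfUnityMeasure κ))
  haveI : SigmaFinite (volume : Measure Circle) := inferInstance
  -- expansion of one factor as a sum over Fin κ
  have hfac : ∀ (z : Fin m → Circle) (j : Fin n),
      (1 + ∑ t ∈ Finset.Icc 1 (κ - 1), w j * ∏ i, (z i : ℂ) ^ ((t : ℤ) * a i j))
        = ∑ t : Fin κ, (if (t : ℕ) = 0 then 1 else w j)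
            * ∏ i, (z i : ℂ) ^ (((t : ℕ) : ℤ) * a i j) := by
    intro z j
    rw [Fin.sum_univ_eq_sum_range
      (fun t : ℕ => (if t = 0 then (1 : ℂ) else w j) * ∏ i, (z i : ℂ) ^ ((t : ℤ) * a i j)) κ]
    rw [range_eq_insert κ hκ0, Finset.sum_insert (by simp)]
    congr 1
    · simp
    · refine Finset.sum_congr rfl fun t ht => ?_
      rw [if_neg]
      simp only [Finset.mem_Icc] at ht
      omega
  -- expansion of the whole product
  have hexp : ∀ z : Fin m → Circle,
      (∏ j, (1 + ∑ t ∈ Finset.Icc 1 (κ - 1), w j * ∏ i, (z i : ℂ) ^ ((t : ℤ) * a i j)))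
        = ∑ ξ : Fin n → Fin κ,
            (∏ j ∈ Finset.univ.filter (fun j => (ξ j : ℕ) ≠ 0), w j)
              * ∏ i, (z i : ℂ) ^ (∑ j, ((ξ j : ℕ) : ℤ) * a i j) := by
    intro z
    simp only [hfac z]
    rw [Finset.prod_univ_sum]
    rw [Fintype.piFinset_univ]
    refine Finset.sum_congr rfl fun ξ _ => ?_
    rw [Finset.prod_mul_distrib]
    congr 1
    · rw [Finset.prod_filter]
      refine Finset.prod_congr rfl fun j _ => ?_
      by_cases h : (ξ j : ℕ) = 0 <;> simp [h]
    · rw [Finset.prod_comm]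
      refine Finset.prod_congr rfl fun i _ => ?_
      rw [my_zpow_sum _ (Circle.coe_ne_zero (z i))]
  simp only [hexp]
  -- integrability of each summand
  have hint : ∀ ξ : Fin n → Fin κ,
      Integrable (fun z : Fin m → Circle =>
        (∏ j ∈ Finset.univ.filter (fun j => (ξ j : ℕ) ≠ 0), w j)
          * ∏ i, (z i : ℂ) ^ (∑ j, ((ξ j : ℕ) : ℤ) * a i j))
        (Measure.pi fun _ : Fin m => rootsOfUnityMeasure κ) := by
    intro ξ
    refine Integrable.const_mul ?_ _
    refine Integrable.fintype_prod (f := fun i (x : Circle) =>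
      (x : ℂ) ^ (∑ j, ((ξ j : ℕ) : ℤ) * a i j)) fun i => ?_
    have hcont : Continuous (fun x : Circle => (x : ℂ) ^ (∑ j, ((ξ j : ℕ) : ℤ) * a i j)) :=
      Continuous.zpow₀ continuous_subtype_val _ (fun x => Or.inl (Circle.coe_ne_zero x))
    exact hcont.integrable_of_hasCompactSupport ((isClosed_tsupport _).isCompact)
  rw [integral_finset_sum _ fun ξ _ => hint ξ]
  have hpi : ∀ ξ : Fin n → Fin κ,
      (∫ z : Fin m → Circle, ∏ i, (z i : ℂ) ^ (∑ j, ((ξ j : ℕ) : ℤ) * a i j)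
          ∂(Measure.pi fun _ : Fin m => rootsOfUnityMeasure κ))
        = ∏ i, if (κ : ℤ) ∣ ∑ j, ((ξ j : ℕ) : ℤ) * a i j then 1 else 0 := by
    intro ξ
    have h1 : (∫ z : Fin m → Circle, ∏ i, (z i : ℂ) ^ (∑ j, ((ξ j : ℕ) : ℤ) * a i j)
          ∂(Measure.pi fun _ : Fin m => rootsOfUnityMeasure κ))
        = ∏ i, ∫ x : Circle, (x : ℂ) ^ (∑ j, ((ξ j : ℕ) : ℤ) * a i j)
            ∂(rootsOfUnityMeasure κ) :=
      MeasureTheory.integral_fintype_prod_eq_prod (ι := Fin m)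
        (f := fun i (x : Circle) => (x : ℂ) ^ (∑ j, ((ξ j : ℕ) : ℤ) * a i j))
    rw [h1]
    exact Finset.prod_congr rfl fun i _ => char_sum κ hκ0 _
  simp only [integral_const_mul, hpi]
  simp only [Finset.prod_boole]
  rw [Finset.sum_filter]
  refine Finset.sum_congr rfl fun ξ _ => ?_
  have hcond : (∀ i, (∑ j, a i j * ((ξ j : ℕ) : ℤ)) % (κ : ℤ) = 0)
      ↔ (∀ i ∈ Finset.univ, (κ : ℤ) ∣ ∑ j, ((ξ j : ℕ) : ℤ) * a i j) := by
    constructor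
    · intro h i _
      have h2 := Int.dvd_of_emod_eq_zero (h i)
      have h3 : (∑ j, a i j * ((ξ j : ℕ) : ℤ)) = ∑ j, ((ξ j : ℕ) : ℤ) * a i j :=
        Finset.sum_congr rfl fun j _ => mul_comm _ _
      rwa [h3] at h2
    · intro h i
      have h2 := h i (Finset.mem_univ i)
      have h3 : (∑ j, a i j * ((ξ j : ℕ) : ℤ)) = ∑ j, ((ξ j : ℕ) : ℤ) * a i j :=
        Finset.sum_congr rfl fun j _ => mul_comm _ _
      rw [h3]
      exact Int.emod_eq_zero_of_dvd h2
  by_cases h : ∀ i, (∑ j, a i j * ((ξ j : ℕ) : ℤ)) % (κ : ℤ) = 0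
  · rw [if_pos h, if_pos (hcond.mp h), mul_one]
  · rw [if_neg h, if_neg (fun hh => h (hcond.mpr hh)), mul_zero]
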